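/- Let Ǎ ∈ ℂ^{n×n}, λ̌ ∈ ℂ, S ∈ ℂ^{k×k} nilpotent of rank k−1, and let X̌ ∈ ℂ^{n×k} have full column rank. Define E = (Ǎ − λ̌I)X̌ − X̌S. Then λ̌ is an exact eigenvalue of the matrix Ǎ − E X̌† and it has a Jordan block of size at least k; moreover if X̌ has orthonormal columns then the backward perturbation satisfies ‖E X̌†‖_F ≤ ‖E‖_F. -/

import Mathlib

open Matrix

lemma aux_mulVecLin_pow {k : ℕ} (S : Matrix (Fin k) (Fin k) ℂ) (m : ℕ) :
    (S ^ m).mulVecLin = S.mulVecLin ^ m := by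
  induction m with
  | zero => simp [Matrix.mulVecLin_one]; rfl
  | succ m ih => rw [pow_succ, pow_succ, Matrix.mulVecLin_mul, ih, Module.End.mul_eq_comp]

lemma aux_finrank_ker_comp {n : ℕ} (f g : (Fin n → ℂ) →ₗ[ℂ] (Fin n → ℂ)) :
    Module.finrank ℂ (LinearMap.ker (g ∘ₗ f)) ≤
      Module.finrank ℂ (LinearMap.ker g) + Module.finrank ℂ (LinearMap.ker f) := by
  rw [LinearMap.ker_comp]
  set p := Submodule.comap f (LinearMap.ker g) with hp
  have h1 := LinearMap.finrank_range_add_finrank_ker (f.domRestrict p)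
  have h2 : Module.finrank ℂ (LinearMap.range (f.domRestrict p)) ≤
      Module.finrank ℂ (LinearMap.ker g) := by
    apply Submodule.finrank_mono
    rw [LinearMap.range_domRestrict]
    exact Submodule.map_comap_le _ _
  have h3 : Module.finrank ℂ (LinearMap.ker (f.domRestrict p)) ≤
      Module.finrank ℂ (LinearMap.ker f) := by
    rw [LinearMap.ker_domRestrict]
    calc Module.finrank ℂ (Submodule.comap p.subtype (LinearMap.ker f))
        = Module.finrank ℂ ((Submodule.comap p.subtype (LinearMap.ker f)).map p.subtype) :=
          (Submodule.finrank_map_subtype_eq p _).symm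
      _ ≤ Module.finrank ℂ (LinearMap.ker f) := by
          apply Submodule.finrank_mono
          rw [Submodule.map_comap_subtype]
          exact inf_le_right
  omega

lemma aux_ker_pow {n : ℕ} (f : (Fin n → ℂ) →ₗ[ℂ] (Fin n → ℂ)) (m : ℕ) :
    Module.finrank ℂ (LinearMap.ker (f ^ m)) ≤ m * Module.finrank ℂ (LinearMap.ker f) := by
  induction m with
  | zero => simp [LinearMap.ker_eq_bot, Module.End.one_eq_id]
  | succ m ih =>
    rw [pow_succ]
    calc Module.finrank ℂ (LinearMap.ker (f ^ m * f))
        ≤ Module.finrank ℂ (LinearMap.ker (f ^ m)) + Module.finrank ℂ (LinearMap.ker f) :=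
          aux_finrank_ker_comp f (f ^ m)
      _ ≤ m * Module.finrank ℂ (LinearMap.ker f) + Module.finrank ℂ (LinearMap.ker f) := by omega
      _ = (m + 1) * Module.finrank ℂ (LinearMap.ker f) := by ring

lemma aux_mulVec_eq_zero {a b : ℕ} (M : Matrix (Fin a) (Fin b) ℂ)
    (h : ∀ v, M *ᵥ v = 0) : M = 0 := by
  ext i j
  have := congrFun (h (Pi.single j 1)) i
  simpa [Matrix.mulVec_single] using this

lemma aux_frob {a b : ℕ} (M : Matrix (Fin a) (Fin b) ℂ) :
    ∑ i, ∑ j, ‖M i j‖ ^ 2 = (Matrix.trace (M * Mᴴ)).re := by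
  simp [Matrix.trace, Matrix.mul_apply, Matrix.diag, Matrix.conjTranspose_apply,
    Complex.mul_conj, Complex.normSq_eq_norm_sq, ← Complex.ofReal_pow]

/-- Let `S` be nilpotent of rank `k-1`, `X` of full column rank with left
inverse `Xd = X†` (the Moore–Penrose inverse), and `E = (Ǎ - μI)X - XS`. Then `μ` is an
exact eigenvalue of `Ǎ - E X†` with a Jordan block of size at least `k`; moreover if `X`
has orthonormal columns (so `X† = Xᴴ`), the backward perturbation satisfies
`‖E Xᴴ‖_F ≤ ‖E‖_F`. -/
theorem backward_error_eigenvalue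
    (n k : ℕ) (hk : 1 ≤ k) (Ac : Matrix (Fin n) (Fin n) ℂ) (μ : ℂ)
    (S : Matrix (Fin k) (Fin k) ℂ)
    (hSnil : IsNilpotent S) (hSrank : S.rank = k - 1)
    (X : Matrix (Fin n) (Fin k) ℂ)
    (hXrank : Function.Injective X.mulVecLin)
    (Xd : Matrix (Fin k) (Fin n) ℂ) (hXd : Xd * X = 1)
    (E : Matrix (Fin n) (Fin k) ℂ)
    (hE : E = (Ac - μ • 1) * X - X * S) :
    μ ∈ spectrum ℂ (Ac - E * Xd) ∧
    LinearMap.ker (((Ac - E * Xd - μ • 1) ^ (k - 1)).mulVecLin) <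
      LinearMap.ker (((Ac - E * Xd - μ • 1) ^ k).mulVecLin) ∧
    (Xᴴ * X = 1 →
      Real.sqrt (∑ i, ∑ j, ‖(E * Xᴴ) i j‖ ^ 2) ≤ Real.sqrt (∑ i, ∑ j, ‖E i j‖ ^ 2)) := by
  set B := Ac - E * Xd - μ • 1 with hB
  -- intertwining relation
  have hBX : B * X = X * S := by
    have : E * Xd * X = E := by rw [Matrix.mul_assoc, hXd, Matrix.mul_one]
    rw [hB, Matrix.sub_mul, Matrix.sub_mul, this, hE, Matrix.sub_mul]
    abel
  have hBpow : ∀ m, B ^ m * X = X * S ^ m := by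
    intro m
    induction m with
    | zero => simp
    | succ m ih => rw [pow_succ', pow_succ', Matrix.mul_assoc, ih, ← Matrix.mul_assoc, hBX,
        Matrix.mul_assoc]
  -- kernel of S has dimension 1
  have hkerS : Module.finrank ℂ (LinearMap.ker S.mulVecLin) = 1 := by
    have h1 := LinearMap.finrank_range_add_finrank_ker S.mulVecLin
    rw [Module.finrank_pi] at h1
    have h2 : Module.finrank ℂ (LinearMap.range S.mulVecLin) = k - 1 := hSrank
    simp only [Fintype.card_fin] at h1
    omega
  -- S ^ (k-1) ≠ 0
  have hSk1 : S ^ (k - 1) ≠ 0 := by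
    intro h0
    have htop : LinearMap.ker ((S ^ (k - 1)).mulVecLin) = ⊤ := by
      rw [h0]; exact LinearMap.ker_eq_top.mpr (by simp)
    have hle := aux_ker_pow S.mulVecLin (k - 1)
    rw [← aux_mulVecLin_pow, htop, hkerS, mul_one] at hle
    have : Module.finrank ℂ (⊤ : Submodule ℂ (Fin k → ℂ)) = k := by
      rw [finrank_top, Module.finrank_pi, Fintype.card_fin]
    omega
  -- S ^ k = 0
  have hSk : S ^ k = 0 := by
    obtain ⟨N, hN⟩ := hSnil
    have htop : LinearMap.ker ((S.mulVecLin) ^ N) = ⊤ := by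
      rw [← aux_mulVecLin_pow, hN]
      exact LinearMap.ker_eq_top.mpr (by simp)
    have hle := Module.End.ker_pow_le_ker_pow_finrank (S.mulVecLin) N
    rw [htop, top_le_iff] at hle
    have hfr : Module.finrank ℂ (Fin k → ℂ) = k := by
      rw [Module.finrank_pi, Fintype.card_fin]
    rw [hfr] at hle
    apply aux_mulVec_eq_zero
    intro v
    have : v ∈ LinearMap.ker ((S.mulVecLin) ^ k) := hle.symm ▸ Submodule.mem_top
    rwa [← aux_mulVecLin_pow, LinearMap.mem_ker, Matrix.mulVecLin_apply] at this
  -- find a vector v with S^(k-1) *ᵥ v ≠ 0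
  have hv : ∃ v, S ^ (k - 1) *ᵥ v ≠ 0 := by
    by_contra h
    push_neg at h
    exact hSk1 (aux_mulVec_eq_zero _ h)
  obtain ⟨v, hv⟩ := hv
  have hvne : v ≠ 0 := by
    intro h; rw [h, Matrix.mulVec_zero] at hv; exact hv rfl
  set u := X *ᵥ v with hu
  have hune : u ≠ 0 := by
    intro h
    apply hvne
    apply hXrank
    simpa [Matrix.mulVecLin_apply] using h
  have hBk1u : B ^ (k - 1) *ᵥ u ≠ 0 := by
    rw [hu, Matrix.mulVec_mulVec, hBpow, ← Matrix.mulVec_mulVec]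
    intro h
    apply hv
    have := hXrank (a₁ := S ^ (k - 1) *ᵥ v) (a₂ := 0)
    simp only [Matrix.mulVecLin_apply, Matrix.mulVec_zero] at this
    exact this h
  have hBku : B ^ k *ᵥ u = 0 := by
    rw [hu, Matrix.mulVec_mulVec, hBpow, hSk, Matrix.mul_zero, Matrix.zero_mulVec]
  -- det B = 0
  have hdetB : B.det = 0 := by
    have h0 : (B ^ k).det = 0 := by
      rw [← Matrix.exists_mulVec_eq_zero_iff]
      exact ⟨u, hune, hBku⟩
    rw [Matrix.det_pow] at h0
    exact pow_eq_zero_iff (by omega) |>.mp h0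
  refine ⟨?_, ?_, ?_⟩
  · -- μ in spectrum
    rw [spectrum.mem_iff]
    intro hUnit
    have heq : algebraMap ℂ (Matrix (Fin n) (Fin n) ℂ) μ - (Ac - E * Xd) = -B := by
      rw [hB, Algebra.algebraMap_eq_smul_one]
      noncomm_ring
    rw [heq] at hUnit
    rw [Matrix.isUnit_iff_isUnit_det, Matrix.det_neg, hdetB, mul_zero] at hUnit
    exact not_isUnit_zero hUnit
  · -- strict kernel inclusion
    rw [SetLike.lt_iff_le_and_exists]
    constructor
    · intro x hx
      rw [LinearMap.mem_ker, Matrix.mulVecLin_apply] at hx ⊢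
      have hkk : k = (k - 1) + 1 := by omega
      rw [hkk, pow_succ', ← Matrix.mulVec_mulVec, hx, Matrix.mulVec_zero]
    · refine ⟨u, ?_, ?_⟩
      · rw [LinearMap.mem_ker, Matrix.mulVecLin_apply]; exact hBku
      · rw [LinearMap.mem_ker, Matrix.mulVecLin_apply]; exact hBk1u
  · -- Frobenius norm inequality
    intro hortho
    apply Real.sqrt_le_sqrt
    apply le_of_eq
    rw [aux_frob, aux_frob]
    congr 1
    have : E * Xᴴ * (E * Xᴴ)ᴴ = E * Eᴴ := by
      rw [Matrix.conjTranspose_mul, Matrix.conjTranspose_conjTranspose,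
        Matrix.mul_assoc, ← Matrix.mul_assoc Xᴴ X Eᴴ, hortho, Matrix.one_mul]
    rw [this]
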